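/- For every real q with 0 < q ≤ 2, q ≠ 1, and every x in [0,1], the q-Tsallis binary entropy satisfies Hqᵀ(x) ≤ 2^(q/2)·Hqᵀ(1/2)·(H₂ᵀ(x))^(q/2). -/

import Mathlib

open Real Set

/-- The `q`-Tsallis binary entropy `Hqᵀ(x) = (1 - x^q - (1-x)^q)/(q-1)`. -/
noncomputable def tsallisBin (q x : ℝ) : ℝ := (1 - x ^ q - (1 - x) ^ q) / (q - 1)

namespace TsallisAux

lemma hasDerivF (p u : ℝ) (hu0 : 0 < u) (hu1 : u < 1) :
    HasDerivAt (fun u : ℝ => u ^ (p+1) - (1-u) ^ (p+1) - (2*u - 1))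
      ((p+1) * u ^ p + (p+1) * (1-u) ^ p - 2) u := by
  have h1 : HasDerivAt (fun u : ℝ => u ^ (p+1)) ((p+1) * u ^ p) u := by
    have := Real.hasDerivAt_rpow_const (x := u) (p := p+1) (Or.inl hu0.ne')
    simpa using this
  have hd : HasDerivAt (fun u : ℝ => 1 - u) (-1) u := (hasDerivAt_id u).const_sub 1
  have h2 : HasDerivAt (fun u : ℝ => (1-u) ^ (p+1)) (-((p+1) * (1-u) ^ p)) u := by
    have := hd.rpow_const (p := p+1) (Or.inl (by intro h; nlinarith [h] : (1:ℝ) - u ≠ 0))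
    convert this using 1
    rw [show p + 1 - 1 = p by ring]; ring
  have h3 : HasDerivAt (fun u : ℝ => 2*u - 1) 2 u := by
    simpa using ((hasDerivAt_id u).const_mul 2).sub_const 1
  exact ((h1.sub h2).sub h3).congr_deriv (by ring)

lemma hasDerivF' (p u : ℝ) (hu0 : 0 < u) (hu1 : u < 1) :
    HasDerivAt (fun u : ℝ => (p+1) * u ^ p + (p+1) * (1-u) ^ p - 2)
      ((p+1) * (p * u ^ (p-1)) - (p+1) * (p * (1-u) ^ (p-1))) u := by
  have h1 : HasDerivAt (fun u : ℝ => u ^ p) (p * u ^ (p-1)) u :=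
    Real.hasDerivAt_rpow_const (Or.inl hu0.ne')
  have hd : HasDerivAt (fun u : ℝ => 1 - u) (-1) u := (hasDerivAt_id u).const_sub 1
  have h2 : HasDerivAt (fun u : ℝ => (1-u) ^ p) (-(p * (1-u) ^ (p-1))) u := by
    have := hd.rpow_const (p := p) (Or.inl (by intro h; nlinarith [h] : (1:ℝ) - u ≠ 0))
    convert this using 1; ring
  exact (((h1.const_mul (p+1)).add (h2.const_mul (p+1))).sub_const 2).congr_deriv (by ring)

lemma contF (p : ℝ) (hp : 0 < p + 1) :
    ContinuousOn (fun u : ℝ => u ^ (p+1) - (1-u) ^ (p+1) - (2*u - 1)) (Icc (1/2 : ℝ) 1) := by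
  apply ContinuousOn.sub
  apply ContinuousOn.sub
  · exact fun x _ => (Real.continuousAt_rpow_const x (p+1) (Or.inr hp.le)).continuousWithinAt
  · exact fun x _ => ((Real.continuousAt_rpow_const (1-x) (p+1)
      (Or.inr hp.le)).comp (by fun_prop)).continuousWithinAt
  · fun_prop


lemma memIoo (u : ℝ) (hu : u ∈ interior (Icc (1/2 : ℝ) 1)) : 0 < u ∧ u < 1 := by
  rw [interior_Icc] at hu
  exact ⟨by linarith [hu.1], hu.2⟩

lemma lemA_ge (p : ℝ) (hp0 : 0 ≤ p) (hp1 : p ≤ 1) {u : ℝ} (hu : u ∈ Icc (1/2 : ℝ) 1) :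
    2*u - 1 ≤ u ^ (p+1) - (1-u) ^ (p+1) := by
  have hconc : ConcaveOn ℝ (Icc (1/2 : ℝ) 1)
      (fun u : ℝ => u ^ (p+1) - (1-u) ^ (p+1) - (2*u - 1)) := by
    apply concaveOn_of_hasDerivWithinAt2_nonpos (convex_Icc _ _) (contF p (by linarith))
      (f' := fun u => (p+1) * u ^ p + (p+1) * (1-u) ^ p - 2)
      (f'' := fun u => (p+1) * (p * u ^ (p-1)) - (p+1) * (p * (1-u) ^ (p-1)))
    · intro x hx
      obtain ⟨h0, h1⟩ := memIoo x hx
      exact (hasDerivF p x h0 h1).hasDerivWithinAt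
    · intro x hx
      obtain ⟨h0, h1⟩ := memIoo x hx
      exact (hasDerivF' p x h0 h1).hasDerivWithinAt
    · intro x hx
      rw [interior_Icc] at hx
      have h1x : 0 < 1 - x := by linarith [hx.2]
      have hle : x ^ (p-1) ≤ (1-x) ^ (p-1) :=
        Real.rpow_le_rpow_of_nonpos h1x (by linarith [hx.1]) (by linarith)
      have hpp : 0 ≤ (p+1) * p := by positivity
      nlinarith [hpp, hle]
  have hF2 : (fun u : ℝ => u ^ (p+1) - (1-u) ^ (p+1) - (2*u - 1)) (1/2 : ℝ) = 0 := by
    norm_num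
  have hF1 : (fun u : ℝ => u ^ (p+1) - (1-u) ^ (p+1) - (2*u - 1)) (1 : ℝ) = 0 := by
    simp only []
    rw [show (1:ℝ) - 1 = 0 by ring, Real.one_rpow, Real.zero_rpow (by linarith : p + 1 ≠ 0)]
    ring
  obtain ⟨hu1, hu2⟩ := hu
  have key := hconc.2 (left_mem_Icc.2 (by norm_num : (1/2:ℝ) ≤ 1))
    (right_mem_Icc.2 (by norm_num : (1/2:ℝ) ≤ 1))
    (show (0:ℝ) ≤ 2 - 2*u by linarith) (show (0:ℝ) ≤ 2*u - 1 by linarith)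
    (show (2 - 2*u) + (2*u - 1) = 1 by ring)
  rw [hF2, hF1] at key
  simp only [smul_eq_mul, mul_zero, add_zero] at key
  rw [show (2 - 2*u) * (1/2 : ℝ) + (2*u - 1) * 1 = u by ring] at key
  linarith

lemma lemA_le (p : ℝ) (hp0 : -1 < p) (hp1 : p ≤ 0) {u : ℝ} (hu : u ∈ Icc (1/2 : ℝ) 1) :
    u ^ (p+1) - (1-u) ^ (p+1) ≤ 2*u - 1 := by
  have hconc : ConvexOn ℝ (Icc (1/2 : ℝ) 1)
      (fun u : ℝ => u ^ (p+1) - (1-u) ^ (p+1) - (2*u - 1)) := by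
    apply convexOn_of_hasDerivWithinAt2_nonneg (convex_Icc _ _) (contF p (by linarith))
      (f' := fun u => (p+1) * u ^ p + (p+1) * (1-u) ^ p - 2)
      (f'' := fun u => (p+1) * (p * u ^ (p-1)) - (p+1) * (p * (1-u) ^ (p-1)))
    · intro x hx
      obtain ⟨h0, h1⟩ := memIoo x hx
      exact (hasDerivF p x h0 h1).hasDerivWithinAt
    · intro x hx
      obtain ⟨h0, h1⟩ := memIoo x hx
      exact (hasDerivF' p x h0 h1).hasDerivWithinAt
    · intro x hx
      rw [interior_Icc] at hx
      have h1x : 0 < 1 - x := by linarith [hx.2]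
      have hle : x ^ (p-1) ≤ (1-x) ^ (p-1) :=
        Real.rpow_le_rpow_of_nonpos h1x (by linarith [hx.1]) (by linarith)
      have hpp : (p+1) * p ≤ 0 := mul_nonpos_of_nonneg_of_nonpos (by linarith) hp1
      nlinarith [hpp, hle]
  have hF2 : (fun u : ℝ => u ^ (p+1) - (1-u) ^ (p+1) - (2*u - 1)) (1/2 : ℝ) = 0 := by
    norm_num
  have hF1 : (fun u : ℝ => u ^ (p+1) - (1-u) ^ (p+1) - (2*u - 1)) (1 : ℝ) = 0 := by
    simp only []
    rw [show (1:ℝ) - 1 = 0 by ring, Real.one_rpow, Real.zero_rpow (by linarith : p + 1 ≠ 0)]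
    ring
  obtain ⟨hu1, hu2⟩ := hu
  have key := hconc.2 (left_mem_Icc.2 (by norm_num : (1/2:ℝ) ≤ 1))
    (right_mem_Icc.2 (by norm_num : (1/2:ℝ) ≤ 1))
    (show (0:ℝ) ≤ 2 - 2*u by linarith) (show (0:ℝ) ≤ 2*u - 1 by linarith)
    (show (2 - 2*u) + (2*u - 1) = 1 by ring)
  rw [hF2, hF1] at key
  simp only [smul_eq_mul, mul_zero, add_zero] at key
  rw [show (2 - 2*u) * (1/2 : ℝ) + (2*u - 1) * 1 = u by ring] at key
  linarith

lemma key_ge {q a b : ℝ} (hq1 : 1 ≤ q) (hq2 : q ≤ 2) (hb : 0 ≤ b) (hba : b ≤ a) :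
    (a - b) * (a + b) ^ (q - 1) ≤ a ^ q - b ^ q := by
  have ha : 0 ≤ a := hb.trans hba
  rcases ha.eq_or_lt with h | ha
  · have hb0 : b = 0 := le_antisymm (h ▸ hba) hb
    subst hb0
    rw [← h]
    simp
  · have hab : 0 < a + b := by linarith
    have hu : a / (a+b) ∈ Icc (1/2 : ℝ) 1 :=
      ⟨by rw [le_div_iff₀ hab]; linarith, (div_le_one hab).2 (by linarith)⟩
    have hA := lemA_ge (q-1) (by linarith) (by linarith) hu
    rw [show q - 1 + 1 = q by ring] at hA
    rw [show 1 - a / (a+b) = b / (a+b) by field_simp; ring] at hA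
    rw [Real.div_rpow ha.le hab.le, Real.div_rpow hb hab.le] at hA
    have hP : (0:ℝ) < (a+b) ^ q := Real.rpow_pos_of_pos hab q
    have h2 := mul_le_mul_of_nonneg_right hA hP.le
    calc (a - b) * (a + b) ^ (q - 1)
        = (2 * (a/(a+b)) - 1) * (a+b) ^ q := by
          rw [Real.rpow_sub hab, Real.rpow_one]; field_simp; ring
      _ ≤ (a ^ q / (a+b) ^ q - b ^ q / (a+b) ^ q) * (a+b) ^ q := h2
      _ = a ^ q - b ^ q := by field_simp

lemma key_le {q a b : ℝ} (hq1 : 0 < q) (hq2 : q ≤ 1) (hb : 0 ≤ b) (hba : b ≤ a) :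
    a ^ q - b ^ q ≤ (a - b) * (a + b) ^ (q - 1) := by
  have ha : 0 ≤ a := hb.trans hba
  rcases ha.eq_or_lt with h | ha
  · have hb0 : b = 0 := le_antisymm (h ▸ hba) hb
    subst hb0
    rw [← h]
    simp
  · have hab : 0 < a + b := by linarith
    have hu : a / (a+b) ∈ Icc (1/2 : ℝ) 1 :=
      ⟨by rw [le_div_iff₀ hab]; linarith, (div_le_one hab).2 (by linarith)⟩
    have hA := lemA_le (q-1) (by linarith) (by linarith) hu
    rw [show q - 1 + 1 = q by ring] at hA
    rw [show 1 - a / (a+b) = b / (a+b) by field_simp; ring] at hA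
    rw [Real.div_rpow ha.le hab.le, Real.div_rpow hb hab.le] at hA
    have hP : (0:ℝ) < (a+b) ^ q := Real.rpow_pos_of_pos hab q
    have h2 := mul_le_mul_of_nonneg_right hA hP.le
    calc a ^ q - b ^ q
        = (a ^ q / (a+b) ^ q - b ^ q / (a+b) ^ q) * (a+b) ^ q := by field_simp
      _ ≤ (2 * (a/(a+b)) - 1) * (a+b) ^ q := h2
      _ = (a - b) * (a + b) ^ (q - 1) := by
          rw [Real.rpow_sub hab, Real.rpow_one]; field_simp; ring

lemma hasDerivG (q : ℝ) (y : ℝ) :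
    HasDerivAt (fun y : ℝ => exp (q*y) + exp (-(q*y)) + 2 ^ q - 2 - (exp y + exp (-y)) ^ q)
      (q * exp (q*y) - q * exp (-(q*y))
        - (exp y - exp (-y)) * q * (exp y + exp (-y)) ^ (q-1)) y := by
  have h0 : HasDerivAt (fun y : ℝ => q * y) q y := by
    simpa using (hasDerivAt_id y).const_mul q
  have h1 : HasDerivAt (fun y : ℝ => exp (q*y)) (exp (q*y) * q) y := h0.exp
  have h2 : HasDerivAt (fun y : ℝ => exp (-(q*y))) (exp (-(q*y)) * (-q)) y := h0.neg.exp
  have h3 : HasDerivAt (fun y : ℝ => exp y + exp (-y)) (exp y - exp (-y)) y := by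
    have := (Real.hasDerivAt_exp y).add ((hasDerivAt_id y).neg.exp)
    exact this.congr_deriv (by simp only [Pi.neg_apply, id_eq]; ring)
  have h4 : HasDerivAt (fun y : ℝ => (exp y + exp (-y)) ^ q)
      ((exp y - exp (-y)) * q * (exp y + exp (-y)) ^ (q-1)) y :=
    h3.rpow_const (Or.inl (by positivity))
  exact ((((h1.add h2).add_const ((2:ℝ) ^ q)).sub_const 2).sub h4).congr_deriv (by ring)

lemma G_ge (q : ℝ) (hq1 : 1 ≤ q) (hq2 : q ≤ 2) {y : ℝ} (hy : 0 ≤ y) :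
    (exp y + exp (-y)) ^ q ≤ exp (q*y) + exp (-(q*y)) + 2 ^ q - 2 := by
  set g : ℝ → ℝ :=
    fun y => exp (q*y) + exp (-(q*y)) + 2 ^ q - 2 - (exp y + exp (-y)) ^ q with hgdef
  have hmono : MonotoneOn g (Ici (0:ℝ)) := by
    apply monotoneOn_of_deriv_nonneg (convex_Ici 0)
    · exact (Differentiable.continuous fun y => (hasDerivG q y).differentiableAt).continuousOn
    · exact fun y _ => (hasDerivG q y).differentiableAt.differentiableWithinAt
    · intro x hx
      rw [interior_Ici] at hx
      rw [(hasDerivG q x).deriv]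
      have hba : exp (-x) ≤ exp x := exp_le_exp.2 (by linarith [le_of_lt (mem_Ioi.1 hx)])
      have hkey := key_ge hq1 hq2 (exp_pos (-x)).le hba
      have e1 : exp x ^ q = exp (q * x) := by rw [← Real.exp_mul, mul_comm]
      have e2 : exp (-x) ^ q = exp (-(q * x)) := by
        rw [← Real.exp_mul]; ring_nf
      rw [e1, e2] at hkey
      nlinarith [hkey, (by linarith : (0:ℝ) < q)]
  have h0 : g 0 = 0 := by
    simp only [hgdef, mul_zero, neg_zero, Real.exp_zero]
    norm_num
  have := hmono (self_mem_Ici) (mem_Ici.2 hy) hy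
  rw [h0] at this
  simp only [hgdef] at this
  linarith

lemma G_le (q : ℝ) (hq1 : 0 < q) (hq2 : q ≤ 1) {y : ℝ} (hy : 0 ≤ y) :
    exp (q*y) + exp (-(q*y)) + 2 ^ q - 2 ≤ (exp y + exp (-y)) ^ q := by
  set g : ℝ → ℝ :=
    fun y => exp (q*y) + exp (-(q*y)) + 2 ^ q - 2 - (exp y + exp (-y)) ^ q with hgdef
  have hmono : AntitoneOn g (Ici (0:ℝ)) := by
    apply antitoneOn_of_deriv_nonpos (convex_Ici 0)
    · exact (Differentiable.continuous fun y => (hasDerivG q y).differentiableAt).continuousOn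
    · exact fun y _ => (hasDerivG q y).differentiableAt.differentiableWithinAt
    · intro x hx
      rw [interior_Ici] at hx
      rw [(hasDerivG q x).deriv]
      have hba : exp (-x) ≤ exp x := exp_le_exp.2 (by linarith [le_of_lt (mem_Ioi.1 hx)])
      have hkey := key_le hq1 hq2 (exp_pos (-x)).le hba
      have e1 : exp x ^ q = exp (q * x) := by rw [← Real.exp_mul, mul_comm]
      have e2 : exp (-x) ^ q = exp (-(q * x)) := by
        rw [← Real.exp_mul]; ring_nf
      rw [e1, e2] at hkey
      nlinarith [hkey, hq1]
  have h0 : g 0 = 0 := by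
    simp only [hgdef, mul_zero, neg_zero, Real.exp_zero]
    norm_num
  have := hmono (self_mem_Ici) (mem_Ici.2 hy) hy
  rw [h0] at this
  simp only [hgdef] at this
  linarith

lemma Ga_ge (q a : ℝ) (hq1 : 1 ≤ q) (hq2 : q ≤ 2) (ha : 1 ≤ a) :
    (a + a⁻¹) ^ q ≤ a ^ q + (a⁻¹) ^ q + 2 ^ q - 2 := by
  have ha0 : 0 < a := lt_of_lt_of_le one_pos ha
  have hy : 0 ≤ Real.log a := Real.log_nonneg ha
  have h := G_ge q hq1 hq2 hy
  rw [show q * Real.log a = Real.log a * q by ring, Real.exp_mul, Real.exp_log ha0,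
    show -(Real.log a * q) = (-Real.log a) * q by ring, Real.exp_mul, Real.exp_neg,
    Real.exp_log ha0] at h
  exact h

lemma Ga_le (q a : ℝ) (hq1 : 0 < q) (hq2 : q ≤ 1) (ha : 1 ≤ a) :
    a ^ q + (a⁻¹) ^ q + 2 ^ q - 2 ≤ (a + a⁻¹) ^ q := by
  have ha0 : 0 < a := lt_of_lt_of_le one_pos ha
  have hy : 0 ≤ Real.log a := Real.log_nonneg ha
  have h := G_le q hq1 hq2 hy
  rw [show q * Real.log a = Real.log a * q by ring, Real.exp_mul, Real.exp_log ha0,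
    show -(Real.log a * q) = (-Real.log a) * q by ring, Real.exp_mul, Real.exp_neg,
    Real.exp_log ha0] at h
  exact h

section core
variable {q x : ℝ}

lemma setup (hx0 : 0 < x) (hx1 : x < 1) (hx : 1/2 ≤ x) :
    ∃ a m : ℝ, 1 ≤ a ∧ 0 < m ∧ a * m = x ∧ a⁻¹ * m = 1 - x ∧ (a + a⁻¹) * m = 1 ∧
      ∀ q : ℝ, m ^ q = (x * (1-x)) ^ (q/2) := by
  have h1x : 0 < 1 - x := by linarith
  have hsx : 0 < Real.sqrt x := Real.sqrt_pos.2 hx0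
  have hs1x : 0 < Real.sqrt (1-x) := Real.sqrt_pos.2 h1x
  set a := Real.sqrt x / Real.sqrt (1-x) with hadef
  set m := Real.sqrt x * Real.sqrt (1-x) with hmdef
  have ham : a * m = x := by
    calc a * m = Real.sqrt x * Real.sqrt x * (Real.sqrt (1-x) / Real.sqrt (1-x)) := by
          rw [hadef, hmdef]; ring
      _ = x := by rw [div_self hs1x.ne', mul_one, Real.mul_self_sqrt hx0.le]
  have hainv : a⁻¹ = Real.sqrt (1-x) / Real.sqrt x := by rw [hadef, inv_div]
  have hbm : a⁻¹ * m = 1 - x := by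
    calc a⁻¹ * m
        = Real.sqrt (1-x) * Real.sqrt (1-x) * (Real.sqrt x / Real.sqrt x) := by
          rw [hainv, hmdef]; ring
      _ = 1 - x := by rw [div_self hsx.ne', mul_one, Real.mul_self_sqrt h1x.le]
  refine ⟨a, m, ?_, by positivity, ham, hbm, ?_, ?_⟩
  · rw [hadef, le_div_iff₀ hs1x, one_mul]
    exact Real.sqrt_le_sqrt (by linarith)
  · rw [add_mul, ham, hbm]; ring
  · intro q
    rw [hmdef, ← Real.sqrt_mul hx0.le, Real.sqrt_eq_rpow,
      ← Real.rpow_mul (by positivity : (0:ℝ) ≤ x * (1-x)), show (1/2) * q = q/2 by ring]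

lemma core_ge (hq1 : 1 ≤ q) (hq2 : q ≤ 2) (hx : 1/2 ≤ x) (hx1 : x < 1) :
    1 ≤ x ^ q + (1-x) ^ q + (2 ^ q - 2) * (x * (1-x)) ^ (q/2) := by
  have hx0 : 0 < x := by linarith
  obtain ⟨a, m, ha1, hm, ham, hbm, hsum, hmq⟩ := setup hx0 hx1 hx
  have ha0 : 0 < a := lt_of_lt_of_le one_pos ha1
  have hG := Ga_ge q a hq1 hq2 ha1
  have hmqpos : (0:ℝ) < m ^ q := Real.rpow_pos_of_pos hm q
  have h2 := mul_le_mul_of_nonneg_right hG hmqpos.le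
  rw [← Real.mul_rpow (by positivity) hm.le, hsum, Real.one_rpow] at h2
  have e1 : a ^ q * m ^ q = x ^ q := by rw [← Real.mul_rpow ha0.le hm.le, ham]
  have e2 : (a⁻¹) ^ q * m ^ q = (1-x) ^ q := by
    rw [← Real.mul_rpow (by positivity) hm.le, hbm]
  have expand : (a ^ q + (a⁻¹) ^ q + 2 ^ q - 2) * m ^ q
      = a ^ q * m ^ q + (a⁻¹) ^ q * m ^ q + (2 ^ q - 2) * m ^ q := by ring
  rw [expand, e1, e2, hmq q] at h2
  exact h2

lemma core_le (hq1 : 0 < q) (hq2 : q ≤ 1) (hx : 1/2 ≤ x) (hx1 : x < 1) :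
    x ^ q + (1-x) ^ q + (2 ^ q - 2) * (x * (1-x)) ^ (q/2) ≤ 1 := by
  have hx0 : 0 < x := by linarith
  obtain ⟨a, m, ha1, hm, ham, hbm, hsum, hmq⟩ := setup hx0 hx1 hx
  have ha0 : 0 < a := lt_of_lt_of_le one_pos ha1
  have hG := Ga_le q a hq1 hq2 ha1
  have hmqpos : (0:ℝ) < m ^ q := Real.rpow_pos_of_pos hm q
  have h2 := mul_le_mul_of_nonneg_right hG hmqpos.le
  rw [← Real.mul_rpow (by positivity) hm.le, hsum, Real.one_rpow] at h2
  have e1 : a ^ q * m ^ q = x ^ q := by rw [← Real.mul_rpow ha0.le hm.le, ham]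
  have e2 : (a⁻¹) ^ q * m ^ q = (1-x) ^ q := by
    rw [← Real.mul_rpow (by positivity) hm.le, hbm]
  have expand : (a ^ q + (a⁻¹) ^ q + 2 ^ q - 2) * m ^ q
      = a ^ q * m ^ q + (a⁻¹) ^ q * m ^ q + (2 ^ q - 2) * m ^ q := by ring
  rw [expand, e1, e2, hmq q] at h2
  exact h2

lemma core_ge' (hq1 : 1 ≤ q) (hq2 : q ≤ 2) (hx0 : 0 < x) (hx1 : x < 1) :
    1 ≤ x ^ q + (1-x) ^ q + (2 ^ q - 2) * (x * (1-x)) ^ (q/2) := by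
  rcases le_or_gt (1/2 : ℝ) x with h | h
  · exact core_ge hq1 hq2 h hx1
  · have := core_ge hq1 hq2 (x := 1 - x) (by linarith) (by linarith)
    rw [sub_sub_cancel, show (1-x) * x = x * (1-x) by ring] at this
    linarith

lemma core_le' (hq1 : 0 < q) (hq2 : q ≤ 1) (hx0 : 0 < x) (hx1 : x < 1) :
    x ^ q + (1-x) ^ q + (2 ^ q - 2) * (x * (1-x)) ^ (q/2) ≤ 1 := by
  rcases le_or_gt (1/2 : ℝ) x with h | h
  · exact core_le hq1 hq2 h hx1
  · have := core_le hq1 hq2 (x := 1 - x) (by linarith) (by linarith)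
    rw [sub_sub_cancel, show (1-x) * x = x * (1-x) by ring] at this
    linarith
end core
end TsallisAux

/-- For `0 < q ≤ 2`, `q ≠ 1`, and `x ∈ [0,1]`,
`Hqᵀ(x) ≤ 2^(q/2)·Hqᵀ(1/2)·(2x(1-x))^(q/2)`. -/
theorem tsallis_binary_entropy_upper_bound (q x : ℝ) (hq0 : 0 < q) (hq2 : q ≤ 2)
    (hq1 : q ≠ 1) (hx0 : 0 ≤ x) (hx1 : x ≤ 1) :
    tsallisBin q x ≤ (2 : ℝ) ^ (q / 2) * tsallisBin q (1 / 2) * (2 * x * (1 - x)) ^ (q / 2) := by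
  have hq0' : q ≠ 0 := hq0.ne'
  have hq20 : q / 2 ≠ 0 := by positivity
  rcases hx0.eq_or_lt with h0 | h0
  · rw [← h0]
    simp [tsallisBin, Real.zero_rpow hq0', Real.one_rpow, Real.zero_rpow hq20]
  rcases hx1.eq_or_lt with h1 | h1
  · rw [h1]
    simp [tsallisBin, Real.zero_rpow hq0', Real.one_rpow, Real.zero_rpow hq20]
  -- x ∈ (0,1)
  have hxx : (0:ℝ) ≤ x * (1-x) := by nlinarith
  have hRHS : (2 : ℝ) ^ (q / 2) * tsallisBin q (1 / 2) * (2 * x * (1 - x)) ^ (q / 2)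
      = ((2 ^ q - 2) * (x * (1-x)) ^ (q/2)) / (q - 1) := by
    have hhalf : ((1:ℝ)/2) ^ q * 2 ^ q = 1 := by
      rw [← Real.mul_rpow (by norm_num) (by norm_num)]
      norm_num
    have h4 : (2:ℝ) ^ (q/2) * (2*x*(1-x)) ^ (q/2) = 2 ^ q * (x*(1-x)) ^ (q/2) := by
      rw [← Real.mul_rpow (by norm_num) (by nlinarith), show 2*(2*x*(1-x)) = 4*(x*(1-x)) by ring,
        Real.mul_rpow (by norm_num) hxx, show (4:ℝ) = 2 ^ (2:ℝ) by
          rw [show (2:ℝ) = ((2:ℕ):ℝ) by norm_num, Real.rpow_natCast]; norm_num,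
        ← Real.rpow_mul (by norm_num : (0:ℝ) ≤ 2), show (2:ℝ) * (q/2) = q by ring]
    rw [tsallisBin, show (1:ℝ) - 1/2 = 1/2 by norm_num]
    rw [show (2 : ℝ) ^ (q / 2) * ((1 - (1/2:ℝ) ^ q - (1/2:ℝ) ^ q) / (q - 1)) * (2*x*(1-x)) ^ (q/2)
        = ((2:ℝ) ^ (q/2) * (2*x*(1-x)) ^ (q/2)) * (1 - 2*(1/2:ℝ) ^ q) / (q - 1) by ring, h4]
    have h5 : (2:ℝ) ^ q * ((1/2:ℝ) ^ q) = 1 := by linarith [hhalf]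
    linear_combination (-(2*(x*(1-x)) ^ (q/2))/(q-1)) * h5
  rw [hRHS, tsallisBin]
  rcases lt_or_gt_of_ne hq1 with hlt | hgt
  · have hneg : q - 1 < 0 := by linarith
    rw [div_le_div_right_of_neg hneg]
    have := TsallisAux.core_le' hq0 hlt.le h0 h1
    linarith
  · have hpos : 0 < q - 1 := by linarith
    rw [div_le_div_iff_of_pos_right hpos]
    have := TsallisAux.core_ge' hgt.le hq2 h0 h1
    linarith
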